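/- Suppose the basic algorithm defined by y^{k+1} = A(y^k + β_k v^k) is strongly perturbation resilient, {η_ℓ} is a summable sequence of positive reals, and the inner-loop perturbations v^{k,n} of the superiorized algorithm satisfy ‖v^{k,n}‖ ≤ η_{ℓ(k,n)} with (k,n) ↦ ℓ(k,n) injective and strictly increasing in lexicographic order. Then the perturbed sequence {y^k} generated by the superiorized algorithm has the form y^{k+1} = A(y^k + β_k v^k) with {β_k} summable nonnegative and {v^k} bounded; consequently, if the unperturbed algorithm produces an ε-output for every initial point, the superiorized algorithm produces an ε'-output for every ε' > ε. -/
import Mathlib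


/-- x^K is the ε-output of the sequence x with respect to the proximity
function Prox. -/
def IsEpsOutput {L : ℕ} (Prox : EuclideanSpace ℝ (Fin L) → ℝ) (ε : ℝ)
    (x : ℕ → EuclideanSpace ℝ (Fin L)) (K : ℕ) : Prop :=
  Prox (x K) ≤ ε ∧ ∀ k < K, ε < Prox (x k)

/-- Lemma 1: if the basic algorithm given by `A` is strongly perturbation
resilient and produces an ε-output for every initial point, then the
superiorized version (inner perturbation loops with norms bounded by the
summable kernel {η_ℓ} on lexicographically increasing indices, followed by one
application of `A`) can be written as y^{k+1} = A(y^k + β_k v^k) with {β_k}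
summable nonnegative and {v^k} bounded, and hence produces an ε'-output for
every ε' > ε. -/
theorem superiorized_produces_output {L : ℕ}
    (A : EuclideanSpace ℝ (Fin L) → EuclideanSpace ℝ (Fin L))
    (Prox : EuclideanSpace ℝ (Fin L) → ℝ)
    -- strong perturbation resilience of the basic algorithm:
    (hSPR : ∀ ε > (0 : ℝ),
      (∀ x0 : EuclideanSpace ℝ (Fin L),
        ∃ K, IsEpsOutput Prox ε (fun n => A^[n] x0) K) →
      ∀ ε' > ε, ∀ (β : ℕ → ℝ) (v : ℕ → EuclideanSpace ℝ (Fin L))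
        (y : ℕ → EuclideanSpace ℝ (Fin L)),
        (∀ k, 0 ≤ β k) → Summable β → (∃ M : ℝ, ∀ k, ‖v k‖ ≤ M) →
        (∀ k, y (k + 1) = A (y k + β k • v k)) →
        ∃ K, IsEpsOutput Prox ε' y K)
    -- the summable kernel of positive reals:
    (η : ℕ → ℝ) (hηpos : ∀ ℓ, 0 < η ℓ) (hηsum : Summable η)
    -- inner-loop sizes, bounded by Nb:
    (N : ℕ → ℕ) (Nb : ℕ) (hNpos : ∀ k, 0 < N k) (hNb : ∀ k, N k ≤ Nb)
    -- inner-loop perturbations and their kernel indices: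
    (v : ℕ → ℕ → EuclideanSpace ℝ (Fin L)) (ℓ : ℕ → ℕ → ℕ)
    (hbound : ∀ k n, n < N k → ‖v k n‖ ≤ η (ℓ k n))
    -- (k,n) ↦ ℓ(k,n) is strictly increasing in lexicographic order (hence injective):
    (hlex : ∀ k n k' n', n < N k → n' < N k' →
      (k < k' ∨ (k = k' ∧ n < n')) → ℓ k n < ℓ k' n')
    -- the sequence generated by the superiorized algorithm:
    (y : ℕ → EuclideanSpace ℝ (Fin L))
    (hrec : ∀ k, y (k + 1) = A (y k + ∑ n ∈ Finset.range (N k), v k n))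
    -- the basic algorithm produces an ε-output for every initial point:
    (ε : ℝ) (hε : 0 < ε)
    (hout : ∀ x0 : EuclideanSpace ℝ (Fin L),
      ∃ K, IsEpsOutput Prox ε (fun n => A^[n] x0) K) :
    (∃ (β : ℕ → ℝ) (V : ℕ → EuclideanSpace ℝ (Fin L)),
        (∀ k, 0 ≤ β k) ∧ Summable β ∧ (∃ M : ℝ, ∀ k, ‖V k‖ ≤ M) ∧
        ∀ k, y (k + 1) = A (y k + β k • V k)) ∧
      ∀ ε' > ε, ∃ K, IsEpsOutput Prox ε' y K := by
  classical
  set β : ℕ → ℝ := fun k => ∑ n ∈ Finset.range (N k), η (ℓ k n) with hβ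
  have hβpos : ∀ k, 0 < β k := fun k =>
    Finset.sum_pos (fun n _ => hηpos _) (Finset.nonempty_range_iff.mpr (hNpos k).ne')
  set V : ℕ → EuclideanSpace ℝ (Fin L) :=
    fun k => (β k)⁻¹ • ∑ n ∈ Finset.range (N k), v k n with hV
  have hrecV : ∀ k, y (k + 1) = A (y k + β k • V k) := by
    intro k
    rw [hrec k, hV]
    simp [smul_smul, mul_inv_cancel₀ (hβpos k).ne']
  have hVb : ∀ k, ‖V k‖ ≤ 1 := by
    intro k
    have h1 : ‖∑ n ∈ Finset.range (N k), v k n‖ ≤ β k := by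
      calc ‖∑ n ∈ Finset.range (N k), v k n‖ ≤ ∑ n ∈ Finset.range (N k), ‖v k n‖ :=
            norm_sum_le _ _
        _ ≤ β k := Finset.sum_le_sum fun n hn => hbound k n (Finset.mem_range.mp hn)
    rw [hV]
    simp only [norm_smul, norm_inv, Real.norm_of_nonneg (hβpos k).le]
    rw [inv_mul_le_iff₀ (hβpos k), mul_one]
    exact h1
  have hsum : Summable β := by
    apply summable_of_sum_range_le (fun k => (hβpos k).le)
    intro K
    have hs : ∑ k ∈ Finset.range K, β k
        = ∑ p ∈ (Finset.range K).sigma (fun k => Finset.range (N k)), η (ℓ p.1 p.2) := by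
      rw [Finset.sum_sigma]
    rw [hs]
    have hinj : ∀ p ∈ (Finset.range K).sigma (fun k => Finset.range (N k)),
        ∀ q ∈ (Finset.range K).sigma (fun k => Finset.range (N k)),
        ℓ p.1 p.2 = ℓ q.1 q.2 → p = q := by
      rintro ⟨a, b⟩ hp ⟨c, d⟩ hq heq
      simp only [Finset.mem_sigma, Finset.mem_range] at hp hq
      by_contra hne
      rcases lt_trichotomy a c with h | h | h
      · exact absurd heq (hlex a b c d hp.2 hq.2 (Or.inl h)).ne
      · subst h
        rcases lt_trichotomy b d with h2 | h2 | h2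
        · exact absurd heq (hlex a b a d hp.2 hq.2 (Or.inr ⟨rfl, h2⟩)).ne
        · exact hne (by simp [h2])
        · exact absurd heq.symm (hlex a d a b hq.2 hp.2 (Or.inr ⟨rfl, h2⟩)).ne
      · exact absurd heq.symm (hlex c d a b hq.2 hp.2 (Or.inl h)).ne
    rw [← Finset.sum_image hinj]
    exact Summable.sum_le_tsum _ (fun i _ => (hηpos i).le) hηsum
  refine ⟨⟨β, V, fun k => (hβpos k).le, hsum, ⟨1, hVb⟩, hrecV⟩, ?_⟩
  intro ε' hε'
  exact hSPR ε hε hout ε' hε' β V y (fun k => (hβpos k).le) hsum ⟨1, hVb⟩ hrecV
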